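/- For every a > 0, sup_{τ > 0} e^{-a/τ} / √(τ(τ+1)) ≤ e^{-1/2} / √(a(a+1)). -/

import Mathlib

/-- For every `a > 0`, `sup_{τ>0} e^{-a/τ}/√(τ(τ+1)) ≤ e^{-1/2}/√(a(a+1))`. -/
theorem rho_sup_bound (a : ℝ) (ha : 0 < a) :
    ∀ τ : ℝ, 0 < τ →
      Real.exp (-a / τ) / Real.sqrt (τ * (τ + 1))
        ≤ Real.exp (-(1 / 2)) / Real.sqrt (a * (a + 1)) := by
  intro τ hτ
  have h1 : (0:ℝ) < Real.sqrt (τ * (τ + 1)) := Real.sqrt_pos.mpr (by positivity)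
  have h2 : (0:ℝ) < Real.sqrt (a * (a + 1)) := Real.sqrt_pos.mpr (by positivity)
  rw [div_le_div_iff₀ h1 h2]
  set x := a / τ with hx
  have hx0 : 0 < x := div_pos ha hτ
  have hxτ : x * τ = a := div_mul_cancel₀ a hτ.ne'
  have h3 : x + 1/2 ≤ Real.exp (x - 1/2) := by
    have := Real.add_one_le_exp (x - 1/2); linarith
  have key : a * (a + 1) ≤ (Real.exp (x - 1/2))^2 * (τ * (τ + 1)) := by
    have h4 : a * (a + 1) ≤ (x + 1/2)^2 * (τ * (τ + 1)) := by
      nlinarith [mul_pos hx0 hτ, sq_nonneg τ, mul_pos hτ hτ, hx0.le, hτ.le]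
    calc a * (a + 1) ≤ (x + 1/2)^2 * (τ * (τ + 1)) := h4
      _ ≤ (Real.exp (x - 1/2))^2 * (τ * (τ + 1)) := by
          have hp : (0:ℝ) ≤ x + 1/2 := by positivity
          exact mul_le_mul_of_nonneg_right (pow_le_pow_left₀ hp h3 2) (by positivity)
  have h5 : Real.sqrt (a * (a + 1)) ≤ Real.exp (x - 1/2) * Real.sqrt (τ * (τ + 1)) := by
    have := Real.sqrt_le_sqrt key
    rwa [Real.sqrt_mul (sq_nonneg _), Real.sqrt_sq (Real.exp_pos _).le] at this
  calc Real.exp (-a / τ) * Real.sqrt (a * (a + 1))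
      ≤ Real.exp (-a / τ) * (Real.exp (x - 1/2) * Real.sqrt (τ * (τ + 1))) := by
        exact mul_le_mul_of_nonneg_left h5 (Real.exp_pos _).le
    _ = Real.exp (-(1/2)) * Real.sqrt (τ * (τ + 1)) := by
        rw [← mul_assoc, ← Real.exp_add]
        congr 1
        rw [neg_div]
        ring_nf
        rw [hx]
        ring_nf
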